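/- For a finite group G, if H and K both attain the maximal Chermak–Delgado measure m*(G), then the product HK is a subgroup of G (i.e., HK = KH) and HK also attains m*(G). -/

import Mathlib

open Pointwise

/-- Chermak–Delgado measure of a subgroup. -/
noncomputable def mCD (G : Type*) [Group G] (H : Subgroup G) : ℕ :=
  Nat.card H * Nat.card (Subgroup.centralizer (H : Set G))

/-- Maximal Chermak–Delgado measure. -/
noncomputable def mStar (G : Type*) [Group G] : ℕ :=
  sSup (Set.range (mCD G))

/-- Chermak–Delgado lattice (as a set of subgroups). -/
def CD (G : Type*) [Group G] : Set (Subgroup G) :=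
  {H | mCD G H = mStar G}

/-- A group has dense CD-subgroups if for all subgroups H < K with H not
maximal in K, there exists X in CD(G) with H < X < K. -/
def DenseCD (G : Type*) [Group G] : Prop :=
  ∀ H K : Subgroup G, H < K → (∃ L : Subgroup G, H < L ∧ L < K) →
    ∃ X ∈ CD G, H < X ∧ X < K

section Aux

variable {G : Type*} [Group G]

lemma aux_img (H K : Subgroup G) :
    Nat.card ((H : Set G).image (QuotientGroup.mk : G → G ⧸ K)) *
      Nat.card (H ⊓ K : Subgroup G) = Nat.card H := by
  classical
  set s := K.subgroupOf H with hs
  have hrel : ∀ (a b : H), QuotientGroup.leftRel s a b →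
      QuotientGroup.leftRel K (a : G) (b : G) := by
    intro a b hab
    rw [QuotientGroup.leftRel_apply] at hab ⊢
    simpa [hs, Subgroup.mem_subgroupOf] using hab
  let f : H ⧸ s → G ⧸ K := Quotient.map' Subtype.val hrel
  have hinj : Function.Injective f := by
    intro x y
    induction x using Quotient.inductionOn'
    induction y using Quotient.inductionOn'
    rename_i a b
    intro hab
    have : QuotientGroup.mk (a : G) = QuotientGroup.mk (b : G) := hab
    rw [QuotientGroup.eq] at this
    apply Quotient.sound'
    rw [QuotientGroup.leftRel_apply]
    simpa [hs, Subgroup.mem_subgroupOf] using this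
  have hrange : Set.range f = (H : Set G).image (QuotientGroup.mk : G → G ⧸ K) := by
    ext q
    constructor
    · rintro ⟨x, rfl⟩
      induction x using Quotient.inductionOn'
      rename_i a
      exact ⟨a, a.2, rfl⟩
    · rintro ⟨g, hg, rfl⟩
      exact ⟨QuotientGroup.mk (⟨g, hg⟩ : H), rfl⟩
  have hcard1 : Nat.card ((H : Set G).image (QuotientGroup.mk : G → G ⧸ K)) =
      Nat.card (H ⧸ s) := by
    rw [← hrange, Nat.card_range_of_injective hinj]
  have hcard2 : Nat.card (H ⊓ K : Subgroup G) = Nat.card s := by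
    have h : (H ⊓ K).subgroupOf H = s := by
      rw [hs, inf_comm, Subgroup.inf_subgroupOf_right]
    rw [← h]
    exact (Nat.card_congr ((Subgroup.subgroupOfEquivOfLe inf_le_left).toEquiv)).symm
  rw [hcard1, hcard2, ← Subgroup.index_eq_card, Subgroup.index_mul_card]

lemma aux_prod (H K : Subgroup G) :
    Nat.card ((H : Set G) * (K : Set G)) * Nat.card (H ⊓ K : Subgroup G) =
      Nat.card H * Nat.card K := by
  rw [Subgroup.card_mul_eq_card_subgroup_mul_card_quotient K (H : Set G)]
  rw [mul_comm (Nat.card K) _, mul_assoc, mul_comm (Nat.card K) _, ← mul_assoc, aux_img H K,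
    mul_comm]

lemma aux_cent_sup (H K : Subgroup G) :
    Subgroup.centralizer ((H ⊔ K : Subgroup G) : Set G) =
      Subgroup.centralizer (H : Set G) ⊓ Subgroup.centralizer (K : Set G) := by
  apply le_antisymm
  · exact le_inf (Subgroup.centralizer_le (SetLike.coe_subset_coe.mpr le_sup_left))
      (Subgroup.centralizer_le (SetLike.coe_subset_coe.mpr le_sup_right))
  · intro x hx
    obtain ⟨hx1, hx2⟩ := hx
    rw [Subgroup.mem_centralizer_iff]
    intro g hg
    have hsub : H ⊔ K ≤ Subgroup.centralizer {x} := by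
      apply sup_le
      · intro h hh
        rw [Subgroup.mem_centralizer_iff]
        rintro y rfl
        exact (Subgroup.mem_centralizer_iff.mp hx1 h hh).symm
      · intro h hh
        rw [Subgroup.mem_centralizer_iff]
        rintro y rfl
        exact (Subgroup.mem_centralizer_iff.mp hx2 h hh).symm
    exact (Subgroup.mem_centralizer_iff.mp (hsub hg) x rfl).symm

variable [Finite G]

lemma mCD_pos (L : Subgroup G) : 0 < mCD G L :=
  Nat.mul_pos Nat.card_pos Nat.card_pos

lemma mCD_le_mStar (L : Subgroup G) : mCD G L ≤ mStar G := by
  apply le_csSup _ (Set.mem_range_self L)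
  refine ⟨Nat.card G * Nat.card G, ?_⟩
  rintro x ⟨M, rfl⟩
  exact Nat.mul_le_mul (Nat.card_le_card_of_injective _ Subtype.val_injective)
    (Nat.card_le_card_of_injective _ Subtype.val_injective)

lemma mStar_pos : 0 < mStar G := lt_of_lt_of_le (mCD_pos ⊥) (mCD_le_mStar ⊥)

end Aux

theorem stmt3 (G : Type*) [Group G] [Finite G] (H K : Subgroup G)
    (hH : mCD G H = mStar G) (hK : mCD G K = mStar G) :
    (H : Set G) * (K : Set G) = (K : Set G) * (H : Set G) ∧
    ∃ L : Subgroup G, (L : Set G) = (H : Set G) * (K : Set G) ∧ mCD G L = mStar G := by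
  classical
  set m := mStar G with hm
  set CH := Subgroup.centralizer (H : Set G) with hCH
  set CK := Subgroup.centralizer (K : Set G) with hCK
  set a := Nat.card ((H : Set G) * (K : Set G)) with ha
  set b := Nat.card (H ⊓ K : Subgroup G) with hb
  set c := Nat.card ((CH : Set G) * (CK : Set G)) with hc
  set d := Nat.card (Subgroup.centralizer ((H ⊔ K : Subgroup G) : Set G)) with hd
  set S := Nat.card (H ⊔ K : Subgroup G) with hS
  set T := Nat.card (Subgroup.centralizer ((H ⊓ K : Subgroup G) : Set G)) with hT
  have e1 : a * b = Nat.card H * Nat.card K := aux_prod H K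
  have e2 : c * d = Nat.card CH * Nat.card CK := by
    have := aux_prod CH CK
    rwa [← aux_cent_sup, ← hd] at this
  -- inequalities
  have hsub1 : (H : Set G) * (K : Set G) ⊆ ((H ⊔ K : Subgroup G) : Set G) := by
    rintro z ⟨x, hx, y, hy, rfl⟩
    exact mul_mem (le_sup_left (α := Subgroup G) hx) (le_sup_right (α := Subgroup G) hy)
  have hsub2 : (CH : Set G) * (CK : Set G) ⊆
      ((Subgroup.centralizer ((H ⊓ K : Subgroup G) : Set G)) : Set G) := by
    rintro z ⟨x, hx, y, hy, rfl⟩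
    exact mul_mem
      (Subgroup.centralizer_le (SetLike.coe_subset_coe.mpr inf_le_left) hx)
      (Subgroup.centralizer_le (SetLike.coe_subset_coe.mpr inf_le_right) hy)
  have i1 : a ≤ S := by
    have := Nat.card_mono (Set.toFinite _) hsub1
    exact this
  have i2 : c ≤ T := by
    have := Nat.card_mono (Set.toFinite _) hsub2
    exact this
  -- the key equality chain
  have key : a * b * (c * d) = m * m := by
    calc a * b * (c * d)
        = (Nat.card H * Nat.card CH) * (Nat.card K * Nat.card CK) := by rw [e1, e2]; ring
      _ = mCD G H * mCD G K := rfl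
      _ = m * m := by rw [hH, hK]
  have hSup : mCD G (H ⊔ K) = S * d := rfl
  have hInf : mCD G (H ⊓ K) = b * T := rfl
  have hchain1 : a * b * (c * d) ≤ a * b * (T * d) :=
    Nat.mul_le_mul le_rfl (Nat.mul_le_mul i2 le_rfl)
  have hchain2 : a * b * (T * d) ≤ S * b * (T * d) :=
    Nat.mul_le_mul (Nat.mul_le_mul i1 le_rfl) le_rfl
  have hchain3 : S * b * (T * d) = mCD G (H ⊔ K) * mCD G (H ⊓ K) := by
    rw [hSup, hInf]; ring
  have hchain4 : mCD G (H ⊔ K) * mCD G (H ⊓ K) ≤ m * m :=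
    Nat.mul_le_mul (mCD_le_mStar _) (mCD_le_mStar _)
  have heq2 : a * b * (T * d) = m * m := by
    apply le_antisymm (hchain2.trans (le_of_eq_of_le hchain3 hchain4))
    calc m * m = a * b * (c * d) := key.symm
      _ ≤ a * b * (T * d) := hchain1
  have heq3 : S * b * (T * d) = m * m := by
    apply le_antisymm (le_of_eq_of_le hchain3 hchain4)
    calc m * m = a * b * (T * d) := heq2.symm
      _ ≤ S * b * (T * d) := hchain2
  have hTd_pos : 0 < T * d := Nat.mul_pos Nat.card_pos Nat.card_pos
  have hb_pos : 0 < b := Nat.card_pos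
  have haS : a = S := by
    have h1 : a * b = S * b :=
      Nat.eq_of_mul_eq_mul_right hTd_pos (heq2.trans heq3.symm)
    exact Nat.eq_of_mul_eq_mul_right hb_pos h1
  have hsupCD : mCD G (H ⊔ K) = m := by
    have hprod : mCD G (H ⊔ K) * mCD G (H ⊓ K) = m * m := by rw [← hchain3, heq3]
    have h1 : m * m ≤ mCD G (H ⊔ K) * m := by
      calc m * m = mCD G (H ⊔ K) * mCD G (H ⊓ K) := hprod.symm
        _ ≤ mCD G (H ⊔ K) * m := Nat.mul_le_mul le_rfl (mCD_le_mStar _)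
    exact le_antisymm (mCD_le_mStar _) (Nat.le_of_mul_le_mul_right h1 mStar_pos)
  have hset : (H : Set G) * (K : Set G) = ((H ⊔ K : Subgroup G) : Set G) := by
    apply Set.eq_of_subset_of_ncard_le hsub1
    rw [← Nat.card_coe_set_eq, ← Nat.card_coe_set_eq]
    have h2 : Nat.card (((H ⊔ K : Subgroup G) : Set G)) = S := by
      simp [hS]
    rw [h2, ← ha, haS]
  constructor
  · have hinv : ((H : Set G) * (K : Set G))⁻¹ = (K : Set G) * (H : Set G) := by
      rw [mul_inv_rev, inv_coe_set, inv_coe_set]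
    rw [← hinv, hset, inv_coe_set]
  · exact ⟨H ⊔ K, hset.symm, hsupCD⟩
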